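/- arXiv:1209.5067 — 2 statements merged into one kernel-verified Lean document; each statement's English description precedes it below -/
import Mathlib

section
/- Grade K_n = Λ_{F_2}(a_1,...,a_n) ⊗ F_2[b_1,...,b_n] by deg(a_i) = 1, deg(b_i) = 2. Then the surjection L_{n+1} → L_n (sending a_{n+1}, b_{n+1} to 0) restricted to invariants is an isomorphism of graded vector spaces in all degrees ≤ n. -/
open MvPolynomial

/-- The ideal generated by the squares of the `a`-variables (indexed by `Sum.inl`); the
quotient is `K_n = Λ_{F₂}(a_1,…,a_n) ⊗ F₂[b_1,…,b_n]` (char 2), with the `b`-variables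
indexed by `Sum.inr`. -/
noncomputable def sqIdealK (n : ℕ) : Ideal (MvPolynomial (Fin n ⊕ Fin n) (ZMod 2)) :=
  Ideal.span (Set.range fun i : Fin n =>
    (X (Sum.inl i) : MvPolynomial (Fin n ⊕ Fin n) (ZMod 2)) ^ 2)

/-- `K_n = Λ_{F₂}(a_1,…,a_n) ⊗ F₂[b_1,…,b_n]`. -/
noncomputable abbrev Kn (n : ℕ) : Type :=
  MvPolynomial (Fin n ⊕ Fin n) (ZMod 2) ⧸ sqIdealK n

/-- The action of `g ∈ Σ_n` on `K_n`, permuting the `a`'s and `b`'s simultaneously. -/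
noncomputable def permActK (n : ℕ) (g : Equiv.Perm (Fin n)) : Kn n →ₐ[ZMod 2] Kn n :=
  Ideal.Quotient.liftₐ (sqIdealK n)
    ((Ideal.Quotient.mkₐ (ZMod 2) (sqIdealK n)).comp
      (rename (Sum.map g g) : _ →ₐ[ZMod 2] _))
    (by
      intro a ha
      refine Submodule.span_induction ?_ ?_ ?_ ?_ ha
      · rintro _ ⟨i, rfl⟩
        rw [AlgHom.comp_apply, map_pow, rename_X, Ideal.Quotient.mkₐ_eq_mk,
          Ideal.Quotient.eq_zero_iff_mem]
        exact Ideal.subset_span ⟨g i, rfl⟩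
      · exact map_zero _
      · intro x y _ _ hx hy; rw [map_add, hx, hy, add_zero]
      · intro c x _ hx; rw [smul_eq_mul, map_mul, hx, mul_zero])

/-- `L_n = K_n^{Σ_n}`, the subalgebra of invariants. -/
noncomputable def Ln (n : ℕ) : Subalgebra (ZMod 2) (Kn n) where
  carrier := {x | ∀ g : Equiv.Perm (Fin n), permActK n g x = x}
  add_mem' := fun hx hy => by intro g; rw [map_add, hx g, hy g]
  mul_mem' := fun hx hy => by intro g; rw [map_mul, hx g, hy g]
  algebraMap_mem' := fun r g => (permActK n g).commutes r

/-- The orbit sum `[m]` of a monomial (given by its exponent vector `μ`): the sum over the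
`Σ_n`-orbit of `m`, each distinct monomial appearing exactly once. -/
noncomputable def orbitSum (n : ℕ) (μ : (Fin n ⊕ Fin n) →₀ ℕ) : Kn n :=
  Ideal.Quotient.mk (sqIdealK n)
    (∑ ν ∈ Finset.image
        (fun g : Equiv.Perm (Fin n) => Finsupp.equivMapDomain (Equiv.sumCongr g g) μ)
        Finset.univ,
      monomial ν (1 : ZMod 2))

/-- The augmentation `K_n → F₂` sending all variables to zero. -/
noncomputable def augK (n : ℕ) : Kn n →ₐ[ZMod 2] ZMod 2 :=
  Ideal.Quotient.liftₐ (sqIdealK n) (aeval 0)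
    (by
      intro a ha
      refine Submodule.span_induction ?_ ?_ ?_ ?_ ha
      · rintro _ ⟨i, rfl⟩
        simp
      · exact map_zero _
      · intro x y _ _ hx hy; rw [map_add, hx, hy, add_zero]
      · intro c x _ hx; rw [smul_eq_mul, map_mul, hx, mul_zero])

/-- The augmentation ideal `I ⊆ L_n`. -/
noncomputable def augIdealL (n : ℕ) : Ideal (Ln n) :=
  RingHom.ker (((augK n).comp (Ln n).val : Ln n →ₐ[ZMod 2] ZMod 2) : Ln n →+* ZMod 2)

/-- The degree-`d` homogeneous component of `K_n`, for the grading with `deg aᵢ = 1`,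
`deg bᵢ = 2`: the span of (images of) monomials of weighted degree `d`. -/
noncomputable def degComp (n d : ℕ) : Submodule (ZMod 2) (Kn n) :=
  Submodule.span (ZMod 2)
    {x | ∃ μ : (Fin n ⊕ Fin n) →₀ ℕ,
      ((∑ i : Fin n, μ (Sum.inl i)) + 2 * ∑ i : Fin n, μ (Sum.inr i)) = d ∧
      x = Ideal.Quotient.mk (sqIdealK n) (monomial μ (1 : ZMod 2))}

/-- The algebra map `K_{n+1} → K_n` sending `a_{n+1}` and `b_{n+1}` to `0` and all other
variables to themselves. -/
noncomputable def truncMap (n : ℕ) : Kn (n + 1) →ₐ[ZMod 2] Kn n :=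
  Ideal.Quotient.liftₐ (sqIdealK (n + 1))
    ((Ideal.Quotient.mkₐ (ZMod 2) (sqIdealK n)).comp
      (aeval (Sum.elim
        (fun i : Fin (n + 1) =>
          if h : (i : ℕ) < n then (X (Sum.inl ⟨(i : ℕ), h⟩) :
            MvPolynomial (Fin n ⊕ Fin n) (ZMod 2)) else 0)
        (fun i : Fin (n + 1) =>
          if h : (i : ℕ) < n then (X (Sum.inr ⟨(i : ℕ), h⟩) :
            MvPolynomial (Fin n ⊕ Fin n) (ZMod 2)) else 0))))
    (by
      intro a ha
      refine Submodule.span_induction ?_ ?_ ?_ ?_ ha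
      · rintro _ ⟨i, rfl⟩
        rw [AlgHom.comp_apply, map_pow, aeval_X, Ideal.Quotient.mkₐ_eq_mk]
        simp only [Sum.elim_inl]
        split_ifs with h
        · rw [Ideal.Quotient.eq_zero_iff_mem]
          exact Ideal.subset_span ⟨⟨(i : ℕ), h⟩, rfl⟩
        · rw [zero_pow (by norm_num), map_zero]
      · exact map_zero _
      · intro x y _ _ hx hy; rw [map_add, hx, hy, add_zero]
      · intro c x _ hx; rw [smul_eq_mul, map_mul, hx, mul_zero])

namespace S16
set_option synthInstance.maxHeartbeats 1000000
set_option maxHeartbeats 1000000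

abbrev σt (n : ℕ) := Fin n ⊕ Fin n
abbrev P (n : ℕ) := MvPolynomial (σt n) (ZMod 2)

/-- admissible exponent vectors: squarefree in the `a`-variables -/
def Adm {n : ℕ} (μ : σt n →₀ ℕ) : Prop := ∀ i : Fin n, μ (Sum.inl i) ≤ 1

instance {n : ℕ} (μ : σt n →₀ ℕ) : Decidable (Adm μ) := by unfold Adm; infer_instance

/-- weighted degree -/
def Wdeg {n : ℕ} (μ : σt n →₀ ℕ) : ℕ :=
  (∑ i : Fin n, μ (Sum.inl i)) + 2 * ∑ i : Fin n, μ (Sum.inr i)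

/-- action of a permutation on exponent vectors -/
def pact {n : ℕ} (g : Equiv.Perm (Fin n)) (μ : σt n →₀ ℕ) : σt n →₀ ℕ :=
  Finsupp.equivMapDomain (Equiv.sumCongr g g) μ

lemma pact_apply_inl {n : ℕ} (g : Equiv.Perm (Fin n)) (μ : σt n →₀ ℕ) (i : Fin n) :
    pact g μ (Sum.inl i) = μ (Sum.inl (g⁻¹ i)) := rfl

lemma pact_apply_inr {n : ℕ} (g : Equiv.Perm (Fin n)) (μ : σt n →₀ ℕ) (i : Fin n) :
    pact g μ (Sum.inr i) = μ (Sum.inr (g⁻¹ i)) := rfl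

lemma pact_pact {n : ℕ} (g h : Equiv.Perm (Fin n)) (μ : σt n →₀ ℕ) :
    pact g (pact h μ) = pact (g * h) μ := by
  ext x; cases x <;> rfl

lemma pact_one {n : ℕ} (μ : σt n →₀ ℕ) : pact 1 μ = μ := by
  ext x; cases x <;> rfl


def emb (n : ℕ) : σt n → σt (n + 1) := Sum.map Fin.castSucc Fin.castSucc

lemma emb_inj (n : ℕ) : Function.Injective (emb n) :=
  Function.Injective.sumMap (Fin.castSucc_injective n) (Fin.castSucc_injective n)

noncomputable def ebd {n : ℕ} (μ : σt n →₀ ℕ) : σt (n + 1) →₀ ℕ := Finsupp.mapDomain (emb n) μ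

noncomputable def rstr {n : ℕ} (ν : σt (n + 1) →₀ ℕ) : σt n →₀ ℕ :=
  Finsupp.comapDomain (emb n) ν ((emb_inj n).injOn)

def AvoidLast {n : ℕ} (ν : σt (n + 1) →₀ ℕ) : Prop :=
  ν (Sum.inl (Fin.last n)) = 0 ∧ ν (Sum.inr (Fin.last n)) = 0

instance {n : ℕ} (ν : σt (n + 1) →₀ ℕ) : Decidable (AvoidLast ν) := by
  unfold AvoidLast; infer_instance

lemma rstr_apply {n : ℕ} (ν : σt (n + 1) →₀ ℕ) (x : σt n) : rstr ν x = ν (emb n x) := rfl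

lemma ebd_apply_emb {n : ℕ} (μ : σt n →₀ ℕ) (x : σt n) : ebd μ (emb n x) = μ x :=
  Finsupp.mapDomain_apply (emb_inj n) μ x

lemma not_mem_range_emb_iff {n : ℕ} (y : σt (n + 1)) :
    y ∉ Set.range (emb n) ↔ y = Sum.inl (Fin.last n) ∨ y = Sum.inr (Fin.last n) := by
  constructor
  · intro h
    rcases y with i | i
    · rcases Fin.lastCases (motive := fun i => i = Fin.last n ∨ ∃ j : Fin n, i = j.castSucc)
        (Or.inl rfl) (fun j => Or.inr ⟨j, rfl⟩) i with h1 | ⟨j, rfl⟩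
      · exact Or.inl (by rw [h1])
      · exact absurd ⟨Sum.inl j, rfl⟩ h
    · rcases Fin.lastCases (motive := fun i => i = Fin.last n ∨ ∃ j : Fin n, i = j.castSucc)
        (Or.inl rfl) (fun j => Or.inr ⟨j, rfl⟩) i with h1 | ⟨j, rfl⟩
      · exact Or.inr (by rw [h1])
      · exact absurd ⟨Sum.inr j, rfl⟩ h
  · rintro (rfl | rfl) ⟨x, hx⟩ <;>
    · rcases x with j | j <;> simp only [emb, Sum.map_inl, Sum.map_inr,
        Sum.inl.injEq, Sum.inr.injEq, reduceCtorEq] at hx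
      exact absurd (congrArg Fin.val hx) (by simpa using j.isLt.ne)

lemma ebd_apply_not_range {n : ℕ} (μ : σt n →₀ ℕ) {y : σt (n + 1)}
    (hy : y ∉ Set.range (emb n)) : ebd μ y = 0 :=
  Finsupp.mapDomain_notin_range μ y hy

lemma avoidLast_ebd {n : ℕ} (μ : σt n →₀ ℕ) : AvoidLast (ebd μ) := by
  constructor <;>
    exact ebd_apply_not_range μ (by rw [not_mem_range_emb_iff]; simp)

lemma rstr_ebd {n : ℕ} (μ : σt n →₀ ℕ) : rstr (ebd μ) = μ := by
  ext x; rw [rstr_apply, ebd_apply_emb]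

lemma ebd_rstr {n : ℕ} (ν : σt (n + 1) →₀ ℕ) (h : AvoidLast ν) : ebd (rstr ν) = ν := by
  ext y
  by_cases hy : y ∈ Set.range (emb n)
  · rcases hy with ⟨x, rfl⟩; rw [ebd_apply_emb, rstr_apply]
  · rw [ebd_apply_not_range _ hy]
    rcases (not_mem_range_emb_iff y).1 hy with rfl | rfl
    · exact h.1.symm
    · exact h.2.symm


-- coefficient lemmas
lemma wdeg_pact {n : ℕ} (g : Equiv.Perm (Fin n)) (μ : σt n →₀ ℕ) :
    Wdeg (pact g μ) = Wdeg μ := by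
  unfold Wdeg
  congr 1
  · exact Fintype.sum_equiv g⁻¹ _ _ (fun i => rfl)
  · congr 1
    exact Fintype.sum_equiv g⁻¹ _ _ (fun i => rfl)

lemma wdeg_ebd {n : ℕ} (μ : σt n →₀ ℕ) : Wdeg (ebd μ) = Wdeg μ := by
  unfold Wdeg
  rw [Fin.sum_univ_castSucc (f := fun i => ebd μ (Sum.inl i)),
    Fin.sum_univ_castSucc (f := fun i => ebd μ (Sum.inr i))]
  have h1 : ∀ i : Fin n, ebd μ (Sum.inl i.castSucc) = μ (Sum.inl i) := fun i =>
    ebd_apply_emb μ (Sum.inl i)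
  have h2 : ∀ i : Fin n, ebd μ (Sum.inr i.castSucc) = μ (Sum.inr i) := fun i =>
    ebd_apply_emb μ (Sum.inr i)
  simp only [h1, h2, (avoidLast_ebd μ).1, (avoidLast_ebd μ).2, add_zero]

lemma adm_pact {n : ℕ} (g : Equiv.Perm (Fin n)) {μ : σt n →₀ ℕ} (h : Adm μ) :
    Adm (pact g μ) := fun i => h (g⁻¹ i)

lemma adm_ebd {n : ℕ} {μ : σt n →₀ ℕ} (h : Adm μ) : Adm (ebd μ) := by
  intro i
  refine Fin.lastCases (motive := fun i => ebd μ (Sum.inl i) ≤ 1) ?_ ?_ i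
  · show ebd μ (Sum.inl (Fin.last n)) ≤ 1
    rw [(avoidLast_ebd μ).1]; exact Nat.zero_le 1
  · intro j
    show ebd μ (Sum.inl j.castSucc) ≤ 1
    rw [show (Sum.inl j.castSucc : σt (n+1)) = emb n (Sum.inl j) from rfl,
      ebd_apply_emb μ (Sum.inl j)]; exact h j

-- next segment

lemma mem_sqIdeal_iff {n : ℕ} (p : P n) :
    p ∈ sqIdealK n ↔ ∀ μ : σt n →₀ ℕ, Adm μ → coeff μ p = 0 := by
  constructor
  · intro hp
    refine Submodule.span_induction ?_ ?_ ?_ ?_ hp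
    · rintro _ ⟨i, rfl⟩ μ hμ
      show coeff μ ((X (Sum.inl i) : P n) ^ 2) = 0
      rw [X_pow_eq_monomial, coeff_monomial, if_neg]
      intro h
      have := hμ i
      rw [← h, Finsupp.single_apply, if_pos rfl] at this
      omega
    · intro μ _; rw [coeff_zero]
    · intro x y _ _ hx hy μ hμ; rw [coeff_add, hx μ hμ, hy μ hμ, add_zero]
    · intro c x _ hx μ hμ
      rw [smul_eq_mul, coeff_mul]
      refine Finset.sum_eq_zero fun z hz => ?_
      rw [Finset.HasAntidiagonal.mem_antidiagonal] at hz
      have : Adm z.2 := fun i => le_trans (by rw [← hz]; simp [Finsupp.add_apply]) (hμ i)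
      rw [hx z.2 this, mul_zero]
  · intro h
    rw [show p = ∑ μ ∈ p.support, monomial μ (coeff μ p) from (support_sum_monomial_coeff p).symm]
    refine Submodule.sum_mem _ fun μ hμ => ?_
    have hna : ¬ Adm μ := fun ha => (mem_support_iff.1 hμ) (h μ ha)
    rw [Adm, not_forall] at hna
    obtain ⟨i, hi⟩ := hna
    have h2 : Finsupp.single (Sum.inl i) 2 ≤ μ := by
      rw [Finsupp.single_le_iff]; omega
    have : monomial μ (coeff μ p) =
        (X (Sum.inl i) : P n) ^ 2 * monomial (μ - Finsupp.single (Sum.inl i) 2) (coeff μ p) := by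
      rw [X_pow_eq_monomial, monomial_mul, one_mul, add_tsub_cancel_of_le h2]
    rw [this]
    exact Ideal.mul_mem_right _ _ (Ideal.subset_span ⟨i, rfl⟩)

noncomputable abbrev qmk (n : ℕ) : P n →+* Kn n := Ideal.Quotient.mk (sqIdealK n)

def Red {n : ℕ} (p : P n) : Prop := ∀ μ, ¬ Adm μ → coeff μ p = 0
def Hom (n d : ℕ) (p : P n) : Prop := ∀ μ, coeff μ p ≠ 0 → Wdeg μ = d
def Inv {n : ℕ} (p : P n) : Prop :=
  ∀ g : Equiv.Perm (Fin n), rename (Sum.map ⇑g ⇑g) p = p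

lemma qmk_eq_iff {n : ℕ} (p q : P n) :
    qmk n p = qmk n q ↔ ∀ μ, Adm μ → coeff μ p = coeff μ q := by
  rw [Ideal.Quotient.eq, mem_sqIdeal_iff]
  constructor
  · intro h μ hμ
    have := h μ hμ
    rwa [coeff_sub, sub_eq_zero] at this
  · intro h μ hμ
    rw [coeff_sub, h μ hμ, sub_self]

noncomputable def red {n : ℕ} (p : P n) : P n :=
  ∑ μ ∈ p.support, if Adm μ then monomial μ (coeff μ p) else 0

lemma coeff_red {n : ℕ} (p : P n) (κ : σt n →₀ ℕ) :
    coeff κ (red p) = if Adm κ then coeff κ p else 0 := by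
  classical
  have h : ∀ μ ∈ p.support, coeff κ (if Adm μ then monomial μ (coeff μ p) else 0)
      = if μ = κ then (if Adm κ then coeff κ p else 0) else 0 := by
    intro μ _
    by_cases h1 : μ = κ
    · subst h1; by_cases h2 : Adm μ <;> simp [h2, coeff_monomial]
    · by_cases h2 : Adm μ <;> simp [h2, coeff_monomial, h1]
  rw [red, coeff_sum, Finset.sum_congr rfl h, Finset.sum_ite_eq' p.support κ]
  by_cases hs : κ ∈ p.support
  · rw [if_pos hs]
  · rw [if_neg hs]
    simp [notMem_support_iff.mp hs]

lemma red_is_red {n : ℕ} (p : P n) : Red (red p) := fun μ h => by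
  rw [coeff_red, if_neg h]

lemma qmk_red {n : ℕ} (p : P n) : qmk n (red p) = qmk n p :=
  (qmk_eq_iff _ _).2 fun μ h => by rw [coeff_red, if_pos h]

lemma red_eq_of_qmk_eq {n : ℕ} {p q : P n} (hp : Red p) (hq : Red q)
    (h : qmk n p = qmk n q) : p = q := by
  ext μ
  by_cases ha : Adm μ
  · exact (qmk_eq_iff p q).1 h μ ha
  · rw [hp μ ha, hq μ ha]

lemma permActK_qmk {n : ℕ} (g : Equiv.Perm (Fin n)) (p : P n) :
    permActK n g (qmk n p) = qmk n (rename (Sum.map ⇑g ⇑g) p) := by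
  show Ideal.Quotient.liftₐ _ _ _ _ = _
  rw [Ideal.Quotient.liftₐ_apply]
  rfl

lemma coeff_rename_perm {n : ℕ} (g : Equiv.Perm (Fin n)) (p : P n) (μ : σt n →₀ ℕ) :
    coeff μ (rename (Sum.map ⇑g ⇑g) p) = coeff (pact g⁻¹ μ) p := by
  have hinj : Function.Injective (Sum.map ⇑g ⇑g) :=
    Function.Injective.sumMap g.injective g.injective
  have hμ : μ = Finsupp.mapDomain (Sum.map ⇑g ⇑g) (pact g⁻¹ μ) := by
    rw [show (Sum.map ⇑g ⇑g) = ⇑(Equiv.sumCongr g g) from rfl,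
      ← Finsupp.equivMapDomain_eq_mapDomain]
    show μ = pact g (pact g⁻¹ μ)
    rw [pact_pact, mul_inv_cancel, pact_one]
  conv_lhs => rw [hμ]
  exact coeff_rename_mapDomain _ hinj p _

lemma inv_coeff {n : ℕ} {p : P n} (h : Inv p) (g : Equiv.Perm (Fin n)) (μ : σt n →₀ ℕ) :
    coeff (pact g μ) p = coeff μ p := by
  conv_lhs => rw [← h g]
  rw [coeff_rename_perm, pact_pact, inv_mul_cancel, pact_one]

lemma inv_of_coeff {n : ℕ} {p : P n}
    (h : ∀ (g : Equiv.Perm (Fin n)) (μ : σt n →₀ ℕ), coeff (pact g μ) p = coeff μ p) :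
    Inv p := by
  intro g
  ext μ
  rw [coeff_rename_perm, ← h g (pact g⁻¹ μ), pact_pact, mul_inv_cancel, pact_one]

noncomputable def T (n : ℕ) : P (n + 1) →ₐ[ZMod 2] P n :=
  aeval (Sum.elim
    (fun i : Fin (n + 1) =>
      if h : (i : ℕ) < n then (X (Sum.inl ⟨(i : ℕ), h⟩) : P n) else 0)
    (fun i : Fin (n + 1) =>
      if h : (i : ℕ) < n then (X (Sum.inr ⟨(i : ℕ), h⟩) : P n) else 0))

lemma truncMap_qmk {n : ℕ} (p : P (n + 1)) :
    truncMap n (qmk (n + 1) p) = qmk n (T n p) := by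
  show Ideal.Quotient.liftₐ _ _ _ _ = _
  rw [Ideal.Quotient.liftₐ_apply]
  rfl

lemma T_vars_emb {n : ℕ} (x : σt n) :
    (Sum.elim
      (fun i : Fin (n + 1) =>
        if h : (i : ℕ) < n then (X (Sum.inl ⟨(i : ℕ), h⟩) : P n) else 0)
      (fun i : Fin (n + 1) =>
        if h : (i : ℕ) < n then (X (Sum.inr ⟨(i : ℕ), h⟩) : P n) else 0)) (emb n x)
      = X x := by
  rcases x with i | i <;>
  · show dite _ _ _ = _
    rw [dif_pos (show _ < n by simp [Fin.isLt])]
    exact congrArg X (by congr 1)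

lemma T_vars_last_inl {n : ℕ} :
    (Sum.elim
      (fun i : Fin (n + 1) =>
        if h : (i : ℕ) < n then (X (Sum.inl ⟨(i : ℕ), h⟩) : P n) else 0)
      (fun i : Fin (n + 1) =>
        if h : (i : ℕ) < n then (X (Sum.inr ⟨(i : ℕ), h⟩) : P n) else 0))
      (Sum.inl (Fin.last n)) = 0 := by
  show dite _ _ _ = _
  rw [dif_neg (by simp)]

lemma T_vars_last_inr {n : ℕ} :
    (Sum.elim
      (fun i : Fin (n + 1) =>
        if h : (i : ℕ) < n then (X (Sum.inl ⟨(i : ℕ), h⟩) : P n) else 0)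
      (fun i : Fin (n + 1) =>
        if h : (i : ℕ) < n then (X (Sum.inr ⟨(i : ℕ), h⟩) : P n) else 0))
      (Sum.inr (Fin.last n)) = 0 := by
  show dite _ _ _ = _
  rw [dif_neg (by simp)]

lemma T_monomial {n : ℕ} (ν : σt (n + 1) →₀ ℕ) (c : ZMod 2) :
    T n (monomial ν c) = if AvoidLast ν then monomial (rstr ν) c else 0 := by
  classical
  rw [T, aeval_monomial]
  by_cases hν : AvoidLast ν
  · rw [if_pos hν]
    conv_lhs => rw [← ebd_rstr ν hν,
      show (ebd (rstr ν)) = Finsupp.mapDomain (emb n) (rstr ν) from rfl]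
    rw [Finsupp.prod_mapDomain_index_inj (emb_inj n)]
    have step : ((rstr ν).prod fun a b => (Sum.elim
        (fun i : Fin (n + 1) =>
          if h : (i : ℕ) < n then (X (Sum.inl ⟨(i : ℕ), h⟩) : P n) else 0)
        (fun i : Fin (n + 1) =>
          if h : (i : ℕ) < n then (X (Sum.inr ⟨(i : ℕ), h⟩) : P n) else 0)) (emb n a) ^ b)
        = (rstr ν).prod fun x e => (X x : P n) ^ e :=
      Finsupp.prod_congr fun x _ => by rw [T_vars_emb]
    rw [step, Finsupp.prod, prod_X_pow_eq_monomial, algebraMap_eq, C_mul_monomial, mul_one]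
  · rw [if_neg hν]
    rw [AvoidLast, not_and_or] at hν
    have : ∃ y ∈ ν.support, (Sum.elim
      (fun i : Fin (n + 1) =>
        if h : (i : ℕ) < n then (X (Sum.inl ⟨(i : ℕ), h⟩) : P n) else 0)
      (fun i : Fin (n + 1) =>
        if h : (i : ℕ) < n then (X (Sum.inr ⟨(i : ℕ), h⟩) : P n) else 0)) y ^ ν y = 0 := by
      rcases hν with h | h
      · exact ⟨Sum.inl (Fin.last n), Finsupp.mem_support_iff.2 h,
          by rw [T_vars_last_inl, zero_pow h]⟩
      · exact ⟨Sum.inr (Fin.last n), Finsupp.mem_support_iff.2 h,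
          by rw [T_vars_last_inr, zero_pow h]⟩
    obtain ⟨y, hy, h0⟩ := this
    rw [Finsupp.prod, Finset.prod_eq_zero hy h0, mul_zero]

lemma coeff_T {n : ℕ} (p : P (n + 1)) (μ : σt n →₀ ℕ) :
    coeff μ (T n p) = coeff (ebd μ) p := by
  classical
  conv_lhs => rw [show p = ∑ ν ∈ p.support, monomial ν (coeff ν p)
    from (support_sum_monomial_coeff p).symm]
  rw [map_sum, coeff_sum]
  have h : ∀ ν ∈ p.support, coeff μ (T n (monomial ν (coeff ν p)))
      = if ν = ebd μ then coeff ν p else 0 := by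
    intro ν _
    rw [T_monomial]
    by_cases hν : AvoidLast ν
    · rw [if_pos hν, coeff_monomial]
      by_cases he : ν = ebd μ
      · subst he
        rw [rstr_ebd, if_pos rfl, if_pos rfl]
      · rw [if_neg he, if_neg (fun hr => he (by rw [← hr, ebd_rstr ν hν]))]
    · rw [if_neg hν, coeff_zero,
        if_neg (fun he : ν = ebd μ => hν (by rw [he]; exact avoidLast_ebd μ))]
  rw [Finset.sum_congr rfl h, Finset.sum_ite_eq' p.support (ebd μ)]
  by_cases hs : ebd μ ∈ p.support
  · rw [if_pos hs]
  · rw [if_neg hs, notMem_support_iff.mp hs]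

lemma mem_Ln {n : ℕ} (x : Kn n) : x ∈ Ln n ↔ ∀ g : Equiv.Perm (Fin n), permActK n g x = x :=
  Iff.rfl

lemma red_rename {n : ℕ} {p : P n} (hp : Red p) (g : Equiv.Perm (Fin n)) :
    Red (rename (Sum.map ⇑g ⇑g) p) := by
  intro μ hμ
  rw [coeff_rename_perm]
  refine hp _ fun ha => hμ ?_
  have := adm_pact g ha
  rwa [pact_pact, mul_inv_cancel, pact_one] at this

lemma mem_Ln_iff_of_red {n : ℕ} {p : P n} (hp : Red p) :
    qmk n p ∈ Ln n ↔ Inv p := by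
  rw [mem_Ln]
  constructor
  · intro h g
    exact red_eq_of_qmk_eq (red_rename hp g) hp (by rw [← permActK_qmk, h g])
  · intro h g
    rw [permActK_qmk, h g]

lemma zmod2_cases : ∀ c : ZMod 2, c = 0 ∨ c = 1 := by decide

lemma mem_degComp_iff {n d : ℕ} (x : Kn n) :
    x ∈ degComp n d ↔ ∃ p : P n, Hom n d p ∧ x = qmk n p := by
  constructor
  · intro hx
    refine Submodule.span_induction ?_ ?_ ?_ ?_ hx
    · rintro y ⟨μ, hμ, rfl⟩
      refine ⟨monomial μ 1, fun κ hκ => ?_, rfl⟩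
      rw [coeff_monomial] at hκ
      by_cases h : μ = κ
      · subst h; exact hμ
      · rw [if_neg h] at hκ; exact absurd rfl hκ
    · exact ⟨0, fun κ hκ => absurd (coeff_zero κ) hκ, (map_zero _).symm⟩
    · rintro x y _ _ ⟨p, hp, rfl⟩ ⟨q, hq, rfl⟩
      refine ⟨p + q, fun κ hκ => ?_, (map_add _ _ _).symm⟩
      rw [coeff_add] at hκ
      rcases (by by_contra hc; push_neg at hc; rw [hc.1, hc.2, add_zero] at hκ; exact hκ rfl :
        coeff κ p ≠ 0 ∨ coeff κ q ≠ 0) with h | h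
      · exact hp κ h
      · exact hq κ h
    · rintro c x _ ⟨p, hp, rfl⟩
      rcases zmod2_cases c with rfl | rfl
      · exact ⟨0, fun κ hκ => absurd (coeff_zero κ) hκ, by rw [zero_smul, map_zero]⟩
      · exact ⟨p, hp, by rw [one_smul]⟩
  · rintro ⟨p, hp, rfl⟩
    rw [show p = ∑ μ ∈ p.support, monomial μ (coeff μ p)
      from (support_sum_monomial_coeff p).symm, map_sum]
    refine Submodule.sum_mem _ fun μ hμ => ?_
    rcases zmod2_cases (coeff μ p) with h | h
    · rw [h, monomial_zero, map_zero]; exact Submodule.zero_mem _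
    · rw [h]
      exact Submodule.subset_span ⟨μ, hp μ (by rw [h]; exact one_ne_zero), rfl⟩

lemma rep_of_mem {n d : ℕ} {x : Kn n} (h1 : x ∈ Ln n) (h2 : x ∈ degComp n d) :
    ∃ p : P n, Red p ∧ Inv p ∧ Hom n d p ∧ x = qmk n p := by
  obtain ⟨p, hp, rfl⟩ := (mem_degComp_iff x).1 h2
  refine ⟨red p, red_is_red p, ?_, ?_, (qmk_red p).symm⟩
  · exact (mem_Ln_iff_of_red (red_is_red p)).1 (by rwa [qmk_red])
  · intro κ hκ
    rw [coeff_red] at hκ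
    by_cases ha : Adm κ
    · rw [if_pos ha] at hκ; exact hp κ hκ
    · rw [if_neg ha] at hκ; exact absurd rfl hκ

lemma mem_of_rep {n d : ℕ} {p : P n} (h1 : Red p) (h2 : Inv p) (h3 : Hom n d p) :
    qmk n p ∈ Ln n ∧ qmk n p ∈ degComp n d :=
  ⟨(mem_Ln_iff_of_red h1).2 h2, (mem_degComp_iff _).2 ⟨p, h3, rfl⟩⟩

def suppIdx {m : ℕ} (μ : σt m →₀ ℕ) : Finset (Fin m) :=
  Finset.univ.filter fun i => μ (Sum.inl i) ≠ 0 ∨ μ (Sum.inr i) ≠ 0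

lemma card_suppIdx_le_wdeg {m : ℕ} (μ : σt m →₀ ℕ) : (suppIdx μ).card ≤ Wdeg μ := by
  have h1 : (suppIdx μ).card = ∑ i ∈ suppIdx μ, 1 := by rw [Finset.sum_const, smul_eq_mul, mul_one]
  rw [h1]
  have h2 : ∑ i ∈ suppIdx μ, 1 ≤ ∑ i ∈ suppIdx μ, (μ (Sum.inl i) + 2 * μ (Sum.inr i)) := by
    refine Finset.sum_le_sum fun i hi => ?_
    rw [suppIdx, Finset.mem_filter] at hi
    rcases hi.2 with h | h <;> omega
  refine le_trans h2 (le_trans (Finset.sum_le_sum_of_subset (Finset.subset_univ _)) ?_)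
  rw [Wdeg, Finset.sum_add_distrib, Finset.mul_sum]

lemma not_mem_suppIdx {m : ℕ} {μ : σt m →₀ ℕ} {j : Fin m} (h : j ∉ suppIdx μ) :
    μ (Sum.inl j) = 0 ∧ μ (Sum.inr j) = 0 := by
  rw [suppIdx, Finset.mem_filter, not_and_or, not_or] at h
  rcases h with h | h
  · exact absurd (Finset.mem_univ j) h
  · exact ⟨not_ne_iff.1 h.1, not_ne_iff.1 h.2⟩

lemma T_inj_core {n d : ℕ} (hd : d ≤ n) {p : P (n + 1)} (hi : Inv p)
    (hh : Hom (n + 1) d p) (hT : T n p = 0) : p = 0 := by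
  by_contra hp
  obtain ⟨μ, hμ⟩ := ne_zero_iff.1 hp
  have hw : Wdeg μ = d := hh μ hμ
  have hcard : (suppIdx μ).card < n + 1 := lt_of_le_of_lt (card_suppIdx_le_wdeg μ) (by omega)
  have hj : ∃ j : Fin (n + 1), j ∉ suppIdx μ := by
    by_contra hc
    push_neg at hc
    have : suppIdx μ = Finset.univ := Finset.eq_univ_iff_forall.2 hc
    rw [this, Finset.card_univ, Fintype.card_fin] at hcard
    omega
  obtain ⟨j, hj⟩ := hj
  set g := Equiv.swap j (Fin.last n) with hg
  set ν := pact g μ with hν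
  have hco : coeff ν p = coeff μ p := inv_coeff hi g μ
  have hav : AvoidLast ν := by
    have hg' : g⁻¹ (Fin.last n) = j := by rw [Equiv.swap_inv, Equiv.swap_apply_right]
    constructor
    · rw [hν, pact_apply_inl, hg']; exact (not_mem_suppIdx hj).1
    · rw [hν, pact_apply_inr, hg']; exact (not_mem_suppIdx hj).2
  have : coeff (rstr ν) (T n p) = coeff μ p := by
    rw [coeff_T, ebd_rstr ν hav, hco]
  rw [hT, coeff_zero] at this
  exact hμ this.symm

def extFun {n : ℕ} (g : Equiv.Perm (Fin n)) (i : Fin (n + 1)) : Fin (n + 1) :=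
  Fin.lastCases (Fin.last n) (fun j => (g j).castSucc) i

lemma extFun_castSucc {n : ℕ} (g : Equiv.Perm (Fin n)) (j : Fin n) :
    extFun g j.castSucc = (g j).castSucc := by
  rw [extFun, Fin.lastCases_castSucc]

lemma extFun_last {n : ℕ} (g : Equiv.Perm (Fin n)) :
    extFun g (Fin.last n) = Fin.last n := by
  rw [extFun, Fin.lastCases_last]

def extPerm {n : ℕ} (g : Equiv.Perm (Fin n)) : Equiv.Perm (Fin (n + 1)) where
  toFun := extFun g
  invFun := extFun g⁻¹
  left_inv i := by
    induction i using Fin.lastCases with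
    | last => rw [extFun_last, extFun_last]
    | cast j => rw [extFun_castSucc, extFun_castSucc, Equiv.Perm.coe_inv, Equiv.symm_apply_apply]
  right_inv i := by
    induction i using Fin.lastCases with
    | last => rw [extFun_last, extFun_last]
    | cast j => rw [extFun_castSucc, extFun_castSucc, Equiv.Perm.coe_inv, Equiv.apply_symm_apply]

lemma extPerm_castSucc {n : ℕ} (g : Equiv.Perm (Fin n)) (j : Fin n) :
    extPerm g j.castSucc = (g j).castSucc := extFun_castSucc g j

lemma extPerm_last {n : ℕ} (g : Equiv.Perm (Fin n)) :
    extPerm g (Fin.last n) = Fin.last n := extFun_last g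

lemma extPerm_inv {n : ℕ} (g : Equiv.Perm (Fin n)) : (extPerm g)⁻¹ = extPerm g⁻¹ := rfl

lemma pact_ext_ebd {n : ℕ} (g : Equiv.Perm (Fin n)) (μ : σt n →₀ ℕ) :
    pact (extPerm g) (ebd μ) = ebd (pact g μ) := by
  ext y
  rcases y with j | j
  · refine Fin.lastCases ?_ (fun i => ?_) j
    · rw [pact_apply_inl, extPerm_inv, extPerm_last, (avoidLast_ebd μ).1,
        (avoidLast_ebd (pact g μ)).1]
    · rw [pact_apply_inl, extPerm_inv, extPerm_castSucc,
        show (Sum.inl (g⁻¹ i).castSucc : σt (n + 1)) = emb n (Sum.inl (g⁻¹ i)) from rfl,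
        ebd_apply_emb,
        show (Sum.inl i.castSucc : σt (n + 1)) = emb n (Sum.inl i) from rfl,
        ebd_apply_emb, pact_apply_inl]
  · refine Fin.lastCases ?_ (fun i => ?_) j
    · rw [pact_apply_inr, extPerm_inv, extPerm_last, (avoidLast_ebd μ).2,
        (avoidLast_ebd (pact g μ)).2]
    · rw [pact_apply_inr, extPerm_inv, extPerm_castSucc,
        show (Sum.inr (g⁻¹ i).castSucc : σt (n + 1)) = emb n (Sum.inr (g⁻¹ i)) from rfl,
        ebd_apply_emb,
        show (Sum.inr i.castSucc : σt (n + 1)) = emb n (Sum.inr i) from rfl,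
        ebd_apply_emb, pact_apply_inr]

lemma castPred_aux {n : ℕ} (k : Equiv.Perm (Fin (n + 1))) (hk : k (Fin.last n) = Fin.last n)
    (i : Fin n) : k i.castSucc ≠ Fin.last n :=
  fun h => absurd (k.injective (h.trans hk.symm)) (Fin.castSucc_lt_last i).ne

noncomputable def restrPerm {n : ℕ} (k : Equiv.Perm (Fin (n + 1)))
    (hk : k (Fin.last n) = Fin.last n) : Equiv.Perm (Fin n) :=
  Equiv.ofBijective (fun i => (k i.castSucc).castPred (castPred_aux k hk i))
    (Finite.injective_iff_bijective.1 (fun a b hab => by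
      have := congrArg Fin.castSucc hab
      rw [Fin.castSucc_castPred, Fin.castSucc_castPred] at this
      exact Fin.castSucc_injective n (k.injective this)))

lemma restrPerm_castSucc {n : ℕ} (k : Equiv.Perm (Fin (n + 1)))
    (hk : k (Fin.last n) = Fin.last n) (j : Fin n) :
    (restrPerm k hk j).castSucc = k j.castSucc := by
  show ((fun i => (k i.castSucc).castPred (castPred_aux k hk i)) j).castSucc = _
  rw [Fin.castSucc_castPred]

lemma restrPerm_inv_castSucc {n : ℕ} (k : Equiv.Perm (Fin (n + 1)))
    (hk : k (Fin.last n) = Fin.last n) (i : Fin n) :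
    ((restrPerm k hk)⁻¹ i).castSucc = k⁻¹ i.castSucc := by
  have h1 : k (((restrPerm k hk)⁻¹ i).castSucc) = i.castSucc := by
    rw [← restrPerm_castSucc k hk, Equiv.Perm.coe_inv, Equiv.apply_symm_apply]
  have h2 := congrArg (⇑k⁻¹) h1
  rwa [Equiv.Perm.coe_inv, Equiv.symm_apply_apply] at h2

lemma swap_last_aux {n : ℕ} (k : Equiv.Perm (Fin (n + 1))) (a b : Fin (n + 1) → ℕ)
    (hba : ∀ i, b i = a (k⁻¹ i)) (ha : a (Fin.last n) = 0) (hb : b (Fin.last n) = 0)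
    (i : Fin (n + 1)) :
    b i = a (Equiv.swap (k⁻¹ (Fin.last n)) (Fin.last n) (k⁻¹ i)) := by
  by_cases h1 : k⁻¹ i = k⁻¹ (Fin.last n)
  · have hi : i = Fin.last n := by
      have := congrArg (⇑k) h1
      rwa [Equiv.Perm.coe_inv, Equiv.apply_symm_apply, Equiv.apply_symm_apply] at this
    rw [h1, Equiv.swap_apply_left, hi, hb, ha]
  · by_cases h2 : k⁻¹ i = Fin.last n
    · rw [h2, Equiv.swap_apply_right]
      have e1 : b i = 0 := by rw [hba i, h2, ha]
      have e2 : a (k⁻¹ (Fin.last n)) = 0 := by rw [← hba (Fin.last n), hb]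
      rw [e1, e2]
    · rw [Equiv.swap_apply_of_ne_of_ne h1 h2, ← hba i]

lemma fix_last_of_rel {n : ℕ} {α β : σt (n + 1) →₀ ℕ} (ha : AvoidLast α) (hb : AvoidLast β)
    (k : Equiv.Perm (Fin (n + 1))) (hk : β = pact k α) :
    ∃ k' : Equiv.Perm (Fin (n + 1)), k' (Fin.last n) = Fin.last n ∧ β = pact k' α := by
  refine ⟨k * Equiv.swap (k⁻¹ (Fin.last n)) (Fin.last n), ?_, ?_⟩
  · rw [Equiv.Perm.mul_apply, Equiv.swap_apply_right, Equiv.Perm.coe_inv, Equiv.apply_symm_apply]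
  · have hinv : ∀ i, (k * Equiv.swap (k⁻¹ (Fin.last n)) (Fin.last n))⁻¹ i
        = Equiv.swap (k⁻¹ (Fin.last n)) (Fin.last n) (k⁻¹ i) := fun i => by
      rw [mul_inv_rev, Equiv.Perm.mul_apply, Equiv.swap_inv]
    ext x
    rcases x with i | i
    · rw [pact_apply_inl, hinv]
      exact swap_last_aux k (fun j => α (Sum.inl j)) (fun j => β (Sum.inl j))
        (fun j => by show β (Sum.inl j) = α (Sum.inl (k⁻¹ j)); rw [hk, pact_apply_inl])
        ha.1 hb.1 i
    · rw [pact_apply_inr, hinv]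
      exact swap_last_aux k (fun j => α (Sum.inr j)) (fun j => β (Sum.inr j))
        (fun j => by show β (Sum.inr j) = α (Sum.inr (k⁻¹ j)); rw [hk, pact_apply_inr])
        ha.2 hb.2 i

lemma exists_restr_perm {n : ℕ} {α β : σt (n + 1) →₀ ℕ} (ha : AvoidLast α) (hb : AvoidLast β)
    (k : Equiv.Perm (Fin (n + 1))) (hk : β = pact k α) :
    ∃ h : Equiv.Perm (Fin n), rstr β = pact h (rstr α) := by
  obtain ⟨k', hk'last, hk'⟩ := fix_last_of_rel ha hb k hk
  refine ⟨restrPerm k' hk'last, ?_⟩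
  ext x
  rcases x with i | i
  · rw [pact_apply_inl, rstr_apply, rstr_apply,
      show emb n (Sum.inl i) = Sum.inl i.castSucc from rfl,
      show emb n (Sum.inl ((restrPerm k' hk'last)⁻¹ i))
        = Sum.inl ((restrPerm k' hk'last)⁻¹ i).castSucc from rfl,
      restrPerm_inv_castSucc, hk', pact_apply_inl]
  · rw [pact_apply_inr, rstr_apply, rstr_apply,
      show emb n (Sum.inr i) = Sum.inr i.castSucc from rfl,
      show emb n (Sum.inr ((restrPerm k' hk'last)⁻¹ i))
        = Sum.inr ((restrPerm k' hk'last)⁻¹ i).castSucc from rfl,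
      restrPerm_inv_castSucc, hk', pact_apply_inr]

lemma adm_ebd_rev {n : ℕ} {μ : σt n →₀ ℕ} (h : Adm (ebd μ)) : Adm μ := fun i => by
  rw [← ebd_apply_emb μ (Sum.inl i)]
  exact h i.castSucc

lemma red_T {n : ℕ} {p : P (n + 1)} (hp : Red p) : Red (T n p) := fun μ hμ => by
  rw [coeff_T]
  exact hp _ (fun ha => hμ (adm_ebd_rev ha))

lemma hom_T {n d : ℕ} {p : P (n + 1)} (hp : Hom (n + 1) d p) : Hom n d (T n p) := fun μ hμ => by
  rw [coeff_T] at hμ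
  rw [← wdeg_ebd μ]
  exact hp _ hμ

lemma inv_T {n : ℕ} {p : P (n + 1)} (hp : Inv p) : Inv (T n p) := by
  refine inv_of_coeff fun g μ => ?_
  rw [coeff_T, coeff_T, ← pact_ext_ebd, inv_coeff hp]

/-- the coefficient function for the lift of an invariant polynomial -/
noncomputable def cfun {n : ℕ} (q : P n) (ν : σt (n + 1) →₀ ℕ) : ZMod 2 :=
  if h : ∃ g : Equiv.Perm (Fin (n + 1)), AvoidLast (pact g ν) then
    coeff (rstr (pact h.choose ν)) q
  else 0

lemma cfun_well_defined {n : ℕ} {q : P n} (hq : Inv q) {ν : σt (n + 1) →₀ ℕ}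
    {g g' : Equiv.Perm (Fin (n + 1))} (h : AvoidLast (pact g ν)) (h' : AvoidLast (pact g' ν)) :
    coeff (rstr (pact g ν)) q = coeff (rstr (pact g' ν)) q := by
  have hrel : pact g' ν = pact (g' * g⁻¹) (pact g ν) := by
    rw [pact_pact, mul_assoc, inv_mul_cancel, mul_one]
  obtain ⟨h0, hh0⟩ := exists_restr_perm h h' _ hrel
  rw [hh0, inv_coeff hq]

lemma cfun_eq {n : ℕ} {q : P n} (hq : Inv q) {ν : σt (n + 1) →₀ ℕ}
    {g : Equiv.Perm (Fin (n + 1))} (h : AvoidLast (pact g ν)) :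
    cfun q ν = coeff (rstr (pact g ν)) q := by
  rw [cfun, dif_pos ⟨g, h⟩]
  exact cfun_well_defined hq (Exists.choose_spec (⟨g, h⟩ :
    ∃ g : Equiv.Perm (Fin (n + 1)), AvoidLast (pact g ν))) h

lemma cfun_pact {n : ℕ} {q : P n} (hq : Inv q) (g₀ : Equiv.Perm (Fin (n + 1)))
    (ν : σt (n + 1) →₀ ℕ) : cfun q (pact g₀ ν) = cfun q ν := by
  by_cases h : ∃ g : Equiv.Perm (Fin (n + 1)), AvoidLast (pact g ν)
  · obtain ⟨g, hg⟩ := h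
    have hg2 : AvoidLast (pact (g * g₀⁻¹) (pact g₀ ν)) := by
      rwa [pact_pact, mul_assoc, inv_mul_cancel, mul_one]
    rw [cfun_eq hq hg2, cfun_eq hq hg, pact_pact, mul_assoc, inv_mul_cancel, mul_one]
  · have h2 : ¬ ∃ g : Equiv.Perm (Fin (n + 1)), AvoidLast (pact g (pact g₀ ν)) := by
      rintro ⟨g, hg⟩
      rw [pact_pact] at hg
      exact h ⟨g * g₀, hg⟩
    rw [cfun, dif_neg h2, cfun, dif_neg h]

lemma cfun_ebd {n : ℕ} {q : P n} (hq : Inv q) (μ : σt n →₀ ℕ) :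
    cfun q (ebd μ) = coeff μ q := by
  have h1 : AvoidLast (pact 1 (ebd μ)) := by rw [pact_one]; exact avoidLast_ebd μ
  rw [cfun_eq hq h1, pact_one, rstr_ebd]

/-- the lift of an invariant polynomial to `n + 1` variables -/
noncomputable def liftSet {n : ℕ} (q : P n) : Finset (σt (n + 1) →₀ ℕ) :=
  Finset.image (fun gm : Equiv.Perm (Fin (n + 1)) × (σt n →₀ ℕ) => pact gm.1 (ebd gm.2))
    (Finset.univ ×ˢ q.support)

lemma mem_liftSet_iff {n : ℕ} (q : P n) (κ : σt (n + 1) →₀ ℕ) :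
    κ ∈ liftSet q ↔ ∃ g : Equiv.Perm (Fin (n + 1)), ∃ μ : σt n →₀ ℕ,
      μ ∈ q.support ∧ κ = pact g (ebd μ) := by
  rw [liftSet, Finset.mem_image]
  constructor
  · rintro ⟨⟨g, μ⟩, hm, rfl⟩
    rw [Finset.mem_product] at hm
    exact ⟨g, μ, hm.2, rfl⟩
  · rintro ⟨g, μ, hμ, rfl⟩
    exact ⟨⟨g, μ⟩, Finset.mem_product.2 ⟨Finset.mem_univ g, hμ⟩, rfl⟩

lemma pact_mem_liftSet {n : ℕ} (q : P n) {κ : σt (n + 1) →₀ ℕ} (hκ : κ ∈ liftSet q)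
    (g₀ : Equiv.Perm (Fin (n + 1))) : pact g₀ κ ∈ liftSet q := by
  obtain ⟨g, μ, hμ, rfl⟩ := (mem_liftSet_iff q κ).1 hκ
  exact (mem_liftSet_iff q _).2 ⟨g₀ * g, μ, hμ, pact_pact g₀ g (ebd μ)⟩

noncomputable def liftPoly {n : ℕ} (q : P n) : P (n + 1) :=
  ∑ ν ∈ liftSet q, monomial ν (cfun q ν)

lemma coeff_liftPoly {n : ℕ} (q : P n) (κ : σt (n + 1) →₀ ℕ) :
    coeff κ (liftPoly q) = if κ ∈ liftSet q then cfun q κ else 0 := by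
  classical
  have h : ∀ ν ∈ liftSet q, coeff κ (monomial ν (cfun q ν))
      = if ν = κ then cfun q κ else 0 := by
    intro ν _
    rw [coeff_monomial]
    by_cases h1 : ν = κ
    · subst h1; rw [if_pos rfl]
    · rw [if_neg h1, if_neg h1]
  rw [liftPoly, coeff_sum, Finset.sum_congr rfl h, Finset.sum_ite_eq' (liftSet q) κ]

lemma red_lift {n : ℕ} {q : P n} (hq : Red q) : Red (liftPoly q) := by
  intro κ hκ
  rw [coeff_liftPoly]
  by_cases hm : κ ∈ liftSet q
  · obtain ⟨g, μ, hμ, rfl⟩ := (mem_liftSet_iff q κ).1 hm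
    have hadm : Adm μ := by
      by_contra ha
      exact mem_support_iff.1 hμ (hq μ ha)
    exact absurd (adm_pact g (adm_ebd hadm)) hκ
  · rw [if_neg hm]

lemma hom_lift {n d : ℕ} {q : P n} (hq : Hom n d q) : Hom (n + 1) d (liftPoly q) := by
  intro κ hκ
  rw [coeff_liftPoly] at hκ
  by_cases hm : κ ∈ liftSet q
  · obtain ⟨g, μ, hμ, rfl⟩ := (mem_liftSet_iff q κ).1 hm
    rw [wdeg_pact, wdeg_ebd]
    exact hq μ (mem_support_iff.1 hμ)
  · rw [if_neg hm] at hκ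
    exact absurd rfl hκ

lemma inv_lift {n : ℕ} {q : P n} (hq : Inv q) : Inv (liftPoly q) := by
  refine inv_of_coeff fun g κ => ?_
  rw [coeff_liftPoly, coeff_liftPoly]
  have hmem : pact g κ ∈ liftSet q ↔ κ ∈ liftSet q := by
    constructor
    · intro h
      have := pact_mem_liftSet q h g⁻¹
      rwa [pact_pact, inv_mul_cancel, pact_one] at this
    · intro h
      exact pact_mem_liftSet q h g
  by_cases hm : κ ∈ liftSet q
  · rw [if_pos hm, if_pos (hmem.2 hm), cfun_pact hq]
  · rw [if_neg hm, if_neg (fun h => hm (hmem.1 h))]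

lemma T_lift {n : ℕ} {q : P n} (hq : Inv q) : T n (liftPoly q) = q := by
  ext κ
  rw [coeff_T, coeff_liftPoly]
  by_cases hκ : κ ∈ q.support
  · rw [if_pos ((mem_liftSet_iff q _).2 ⟨1, κ, hκ, (pact_one _).symm⟩), cfun_ebd hq]
  · rw [notMem_support_iff.1 hκ]
    by_cases hm : ebd κ ∈ liftSet q
    · rw [if_pos hm, cfun_ebd hq, notMem_support_iff.1 hκ]
    · rw [if_neg hm]

end S16

/-- the surjection `L_{n+1} → L_n` (restriction of `K_{n+1} → K_n` killing
`a_{n+1}`, `b_{n+1}`) is a bijection between the degree-`d` graded pieces of the invariant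
rings, in every degree `d ≤ n` (grading: `deg aᵢ = 1`, `deg bᵢ = 2`). -/
theorem stmt16 (n d : ℕ) (hd : d ≤ n) :
    Set.BijOn (truncMap n)
      {x : Kn (n + 1) | x ∈ Ln (n + 1) ∧ x ∈ degComp (n + 1) d}
      {x : Kn n | x ∈ Ln n ∧ x ∈ degComp n d} := by
  open S16 in
  refine ⟨?_, ?_, ?_⟩
  · rintro x ⟨h1, h2⟩
    obtain ⟨p, hr, hi, hh, rfl⟩ := rep_of_mem h1 h2
    rw [Set.mem_setOf_eq, show (truncMap n) (qmk (n + 1) p) = qmk n (T n p) from truncMap_qmk p]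
    exact mem_of_rep (red_T hr) (inv_T hi) (hom_T hh)
  · rintro x ⟨h1, h2⟩ y ⟨h1', h2'⟩ hxy
    obtain ⟨p, hr, hi, hh, rfl⟩ := rep_of_mem h1 h2
    obtain ⟨p', hr', hi', hh', rfl⟩ := rep_of_mem h1' h2'
    rw [show (truncMap n) (qmk (n + 1) p) = qmk n (T n p) from truncMap_qmk p,
      show (truncMap n) (qmk (n + 1) p') = qmk n (T n p') from truncMap_qmk p'] at hxy
    have hTp : T n p = T n p' := red_eq_of_qmk_eq (red_T hr) (red_T hr') hxy
    have hinv : Inv (p - p') := fun g => by rw [map_sub, hi g, hi' g]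
    have hhom : Hom (n + 1) d (p - p') := by
      intro κ hκ
      rw [coeff_sub] at hκ
      rcases (by
        by_contra hc
        push_neg at hc
        rw [hc.1, hc.2, sub_zero] at hκ
        exact hκ rfl : coeff κ p ≠ 0 ∨ coeff κ p' ≠ 0) with h | h
      · exact hh κ h
      · exact hh' κ h
    have hsub : p - p' = 0 := T_inj_core hd hinv hhom (by rw [map_sub, hTp, sub_self])
    rw [sub_eq_zero.1 hsub]
  · rintro y ⟨h1, h2⟩
    obtain ⟨q, hr, hi, hh, rfl⟩ := rep_of_mem h1 h2
    refine ⟨qmk (n + 1) (liftPoly q), ?_, ?_⟩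
    · exact mem_of_rep (red_lift hr) (inv_lift hi) (hom_lift hh)
    · rw [show (truncMap n) (qmk (n + 1) (liftPoly q)) = qmk n (T n (liftPoly q))
        from truncMap_qmk (liftPoly q), T_lift hi]
end

section
/- The Poincaré series of L_∞ = lim L_n (graded with deg a_i = 1, deg b_i = 2) equals the Poincaré series of the polynomial ring F_2[v_1, v_2, v_3, ...] with deg v_i = i; equivalently, the dimension of the degree-d part of L_∞ is the number of partitions of d. -/
open MvPolynomial

open Finsupp

namespace Stmt17

variable {n : ℕ}

/-- admissible exponent vectors: squarefree in the `a`-variables -/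
def Adm (μ : (Fin n ⊕ Fin n) →₀ ℕ) : Prop := ∀ i, μ (Sum.inl i) ≤ 1

/-- the weighted degree contributed by index `i` -/
def wdeg (μ : (Fin n ⊕ Fin n) →₀ ℕ) (i : Fin n) : ℕ := μ (Sum.inl i) + 2 * μ (Sum.inr i)

def wt (μ : (Fin n ⊕ Fin n) →₀ ℕ) : ℕ :=
  (∑ i, μ (Sum.inl i)) + 2 * ∑ i, μ (Sum.inr i)

lemma wt_eq_sum (μ : (Fin n ⊕ Fin n) →₀ ℕ) : wt μ = ∑ i, wdeg μ i := by
  simp [wt, wdeg, Finset.sum_add_distrib, Finset.mul_sum]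

def act (g : Equiv.Perm (Fin n)) (μ : (Fin n ⊕ Fin n) →₀ ℕ) : (Fin n ⊕ Fin n) →₀ ℕ :=
  Finsupp.equivMapDomain (Equiv.sumCongr g g) μ

lemma act_inl (g : Equiv.Perm (Fin n)) (μ : (Fin n ⊕ Fin n) →₀ ℕ) (i : Fin n) :
    act g μ (Sum.inl i) = μ (Sum.inl (g.symm i)) := rfl

lemma act_inr (g : Equiv.Perm (Fin n)) (μ : (Fin n ⊕ Fin n) →₀ ℕ) (i : Fin n) :
    act g μ (Sum.inr i) = μ (Sum.inr (g.symm i)) := rfl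

lemma act_act (g h : Equiv.Perm (Fin n)) (μ : (Fin n ⊕ Fin n) →₀ ℕ) :
    act g (act h μ) = act (g * h) μ := by
  ext x; cases x <;> rfl

lemma act_one (μ : (Fin n ⊕ Fin n) →₀ ℕ) : act 1 μ = μ := by
  ext x; cases x <;> rfl

lemma wdeg_act (g : Equiv.Perm (Fin n)) (μ : (Fin n ⊕ Fin n) →₀ ℕ) (i : Fin n) :
    wdeg (act g μ) i = wdeg μ (g.symm i) := rfl

lemma adm_act (g : Equiv.Perm (Fin n)) {μ : (Fin n ⊕ Fin n) →₀ ℕ} (h : Adm μ) :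
    Adm (act g μ) := fun i => h (g.symm i)

lemma wt_act (g : Equiv.Perm (Fin n)) (μ : (Fin n ⊕ Fin n) →₀ ℕ) : wt (act g μ) = wt μ := by
  rw [wt_eq_sum, wt_eq_sum]
  simp only [wdeg_act]
  exact Fintype.sum_equiv g.symm _ _ (fun i => rfl)

def degMS (μ : (Fin n ⊕ Fin n) →₀ ℕ) : Multiset ℕ := Finset.univ.val.map (wdeg μ)

def partsOf (μ : (Fin n ⊕ Fin n) →₀ ℕ) : Multiset ℕ := (degMS μ).filter (· ≠ 0)

lemma degMS_act (g : Equiv.Perm (Fin n)) (μ : (Fin n ⊕ Fin n) →₀ ℕ) :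
    degMS (act g μ) = degMS μ := by
  unfold degMS
  rw [show wdeg (act g μ) = fun i => wdeg μ (g.symm i) from rfl]
  have : Finset.univ.val.map (fun i => wdeg μ (g.symm i))
      = (Finset.univ.val.map ⇑g.symm).map (wdeg μ) := by
    rw [Multiset.map_map]; rfl
  rw [this, Fin.univ_val_map]
  have h2 : (List.ofFn ⇑g.symm : Multiset (Fin n)) = Finset.univ.val := by
    rw [← Fin.univ_val_map]
    have := Finset.map_univ_equiv g.symm
    calc Finset.univ.val.map ⇑g.symm = (Finset.univ.map g.symm.toEmbedding).val := rfl
    _ = Finset.univ.val := by rw [this]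
  rw [h2]

lemma partsOf_act (g : Equiv.Perm (Fin n)) (μ : (Fin n ⊕ Fin n) →₀ ℕ) :
    partsOf (act g μ) = partsOf μ := by
  unfold partsOf; rw [degMS_act]

lemma sum_partsOf (μ : (Fin n ⊕ Fin n) →₀ ℕ) : (partsOf μ).sum = wt μ := by
  have h := Multiset.filter_add_not (fun x => x ≠ 0) (degMS μ)
  have h0 : ((degMS μ).filter (fun x => ¬ x ≠ 0)).sum = 0 := by
    apply Multiset.sum_eq_zero
    intro x hx
    have := Multiset.of_mem_filter hx
    omega
  calc (partsOf μ).sum = (partsOf μ).sum + ((degMS μ).filter (fun x => ¬ x ≠ 0)).sum := by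
        rw [h0, add_zero]
    _ = (degMS μ).sum := by rw [partsOf, ← Multiset.sum_add, h]
    _ = wt μ := by rw [degMS, wt_eq_sum, Finset.sum]

lemma pos_partsOf (μ : (Fin n ⊕ Fin n) →₀ ℕ) : ∀ x ∈ partsOf μ, 0 < x := by
  intro x hx
  have := Multiset.of_mem_filter hx
  omega

lemma card_partsOf_le (μ : (Fin n ⊕ Fin n) →₀ ℕ) : Multiset.card (partsOf μ) ≤ n := by
  calc Multiset.card (partsOf μ) ≤ Multiset.card (degMS μ) := Multiset.card_le_card (Multiset.filter_le _ _)
    _ = n := by rw [degMS, Multiset.card_map]; simp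

/-- two admissible vectors with the same parts lie in the same orbit -/
lemma degMS_eq_of_partsOf_eq {μ ν : (Fin n ⊕ Fin n) →₀ ℕ} (h : partsOf μ = partsOf ν) :
    degMS μ = degMS ν := by
  have key : ∀ ρ : (Fin n ⊕ Fin n) →₀ ℕ,
      degMS ρ = partsOf ρ + Multiset.replicate (n - Multiset.card (partsOf ρ)) 0 := by
    intro ρ
    have h1 := (Multiset.filter_add_not (fun x => x ≠ 0) (degMS ρ)).symm
    have h2 : (degMS ρ).filter (fun x => ¬ x ≠ 0) = Multiset.replicate (Multiset.card ((degMS ρ).filter (fun x => ¬ x ≠ 0))) 0 := by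
      apply Multiset.eq_replicate_card.mpr
      intro x hx
      have := Multiset.of_mem_filter hx
      omega
    have hcard : Multiset.card ((degMS ρ).filter (fun x => ¬ x ≠ 0)) = n - Multiset.card (partsOf ρ) := by
      have htot : Multiset.card (partsOf ρ) + Multiset.card ((degMS ρ).filter (fun x => ¬ x ≠ 0)) = n := by
        rw [partsOf, ← Multiset.card_add, Multiset.filter_add_not]
        rw [degMS, Multiset.card_map]; simp
      omega
    rw [h1, partsOf]
    congr 1
    rw [h2, hcard]
    rfl
  rw [key μ, key ν, h]


/-- two tuples with the same multiset of values differ by a permutation -/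
lemma exists_perm_comp {f f' : Fin n → ℕ}
    (h : Finset.univ.val.map f = Finset.univ.val.map f') :
    ∃ g : Equiv.Perm (Fin n), f ∘ g = f' := by
  have hperm : (List.ofFn f).Perm (List.ofFn f') := by
    rw [← Multiset.coe_eq_coe, ← Fin.univ_val_map, ← Fin.univ_val_map]
    exact h
  have hs1 : List.SortedLE (List.ofFn (f ∘ Tuple.sort f)) :=
    (Tuple.monotone_sort f).sortedLE_ofFn
  have hs2 : List.SortedLE (List.ofFn (f' ∘ Tuple.sort f')) :=
    (Tuple.monotone_sort f').sortedLE_ofFn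
  have h1 : List.ofFn (f ∘ Tuple.sort f) = List.ofFn (f' ∘ Tuple.sort f') :=
    List.Perm.eq_of_sortedLE hs1 hs2 (((Tuple.sort f).ofFn_comp_perm f).trans
        (hperm.trans ((Tuple.sort f').ofFn_comp_perm f').symm))
  have h2 : f ∘ Tuple.sort f = f' ∘ Tuple.sort f' := List.ofFn_injective h1
  refine ⟨(Tuple.sort f').symm.trans (Tuple.sort f), ?_⟩
  funext i
  have := congrFun h2 ((Tuple.sort f').symm i)
  simpa using this

lemma exists_act_eq {μ ν : (Fin n ⊕ Fin n) →₀ ℕ} (hμ : Adm μ) (hν : Adm ν)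
    (h : partsOf μ = partsOf ν) : ∃ g : Equiv.Perm (Fin n), act g μ = ν := by
  obtain ⟨g, hg⟩ := exists_perm_comp (f := wdeg μ) (f' := wdeg ν)
    (degMS_eq_of_partsOf_eq h)
  refine ⟨g⁻¹, ?_⟩
  have key : ∀ i, wdeg μ (g i) = wdeg ν i := fun i => congrFun hg i
  ext x
  cases x with
  | inl i =>
    rw [act_inl]
    have h1 := key i
    have h2 := hμ (g i)
    have h3 := hν i
    simp only [wdeg] at h1
    have : (g⁻¹ : Equiv.Perm (Fin n)).symm i = g i := rfl
    rw [this]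
    omega
  | inr i =>
    rw [act_inr]
    have h1 := key i
    have h2 := hμ (g i)
    have h3 := hν i
    simp only [wdeg] at h1
    have : (g⁻¹ : Equiv.Perm (Fin n)).symm i = g i := rfl
    rw [this]
    omega

/-- existence of an admissible vector with prescribed parts -/
lemma exists_adm_partsOf (s : Multiset ℕ) (hpos : ∀ x ∈ s, x ≠ 0)
    (hcard : Multiset.card s ≤ n) :
    ∃ μ : (Fin n ⊕ Fin n) →₀ ℕ, Adm μ ∧ partsOf μ = s := by
  set l : List ℕ := s.toList ++ List.replicate (n - Multiset.card s) 0 with hl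
  have hlen : l.length = n := by
    simp [hl, Multiset.length_toList]
    omega
  set F : Fin n → ℕ := fun i => l.get (Fin.cast hlen.symm i) with hF
  set μ0 : (Fin n ⊕ Fin n) →₀ ℕ := Finsupp.equivFunOnFinite.symm
    (Sum.elim (fun i => F i % 2) (fun i => F i / 2)) with hμ0
  have happ_inl : ∀ i, μ0 (Sum.inl i) = F i % 2 := fun i => rfl
  have happ_inr : ∀ i, μ0 (Sum.inr i) = F i / 2 := fun i => rfl
  refine ⟨μ0, ?_, ?_⟩
  · intro i
    rw [happ_inl]
    omega
  · have hw : ∀ i, wdeg μ0 i = F i := by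
      intro i
      rw [wdeg, happ_inl, happ_inr]
      omega
    have hms : degMS μ0 = (l : Multiset ℕ) := by
      rw [degMS]
      have h5 : Finset.univ.val.map (wdeg μ0) = Finset.univ.val.map F :=
        Multiset.map_congr rfl (fun i _ => hw i)
      rw [h5, Fin.univ_val_map]
      congr 1
      rw [hF]
      exact (List.ofFn_congr hlen l.get).symm.trans (List.ofFn_get l)
    rw [partsOf, hms]
    have hcoe : (l : Multiset ℕ) = s + Multiset.replicate (n - Multiset.card s) 0 := by
      rw [hl]
      have : ((s.toList ++ List.replicate (n - Multiset.card s) 0 : List ℕ) : Multiset ℕ)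
          = (↑s.toList : Multiset ℕ) + ↑(List.replicate (n - Multiset.card s) 0) := by
        rfl
      rw [this, Multiset.coe_toList, Multiset.coe_replicate]
    rw [hcoe, Multiset.filter_add]
    have h1 : Multiset.filter (fun x => x ≠ 0) s = s := Multiset.filter_eq_self.mpr hpos
    have h2 : Multiset.filter (fun x => x ≠ 0) (Multiset.replicate (n - Multiset.card s) 0)
        = 0 := by
      apply Multiset.filter_eq_nil.mpr
      intro x hx
      rw [Multiset.eq_of_mem_replicate hx]
      simp
    rw [h1, h2, add_zero]


end Stmt17


namespace Stmt17
open MvPolynomial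

variable {n : ℕ}

lemma coeff_eq_zero_of_mem {p : MvPolynomial (Fin n ⊕ Fin n) (ZMod 2)}
    (hp : p ∈ sqIdealK n) : ∀ μ : (Fin n ⊕ Fin n) →₀ ℕ, Adm μ → coeff μ p = 0 := by
  refine Submodule.span_induction ?_ ?_ ?_ ?_ hp
  · rintro _ ⟨i, rfl⟩ μ hμ
    show coeff μ (X (Sum.inl i) ^ 2) = 0
    rw [X_pow_eq_monomial, coeff_monomial]
    split_ifs with h
    · exfalso
      have h2 := hμ i
      rw [← h, Finsupp.single_eq_same] at h2
      omega
    · rfl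
  · intro μ _; exact coeff_zero μ
  · intro x y _ _ hx hy μ hμ
    rw [coeff_add, hx μ hμ, hy μ hμ, add_zero]
  · intro c x _ ih μ hμ
    rw [smul_eq_mul, coeff_mul]
    apply Finset.sum_eq_zero
    rintro ⟨ν₁, ν₂⟩ hmem
    rw [Finset.HasAntidiagonal.mem_antidiagonal] at hmem
    have hν₂ : Adm ν₂ := by
      intro i
      have := hμ i
      have h3 : ν₁ (Sum.inl i) + ν₂ (Sum.inl i) = μ (Sum.inl i) := by
        rw [← Finsupp.add_apply, hmem]
      omega
    rw [ih ν₂ hν₂, mul_zero]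

lemma mk_eq_zero_of_not_adm {μ : (Fin n ⊕ Fin n) →₀ ℕ} (hμ : ¬ Adm μ) :
    Ideal.Quotient.mk (sqIdealK n) (monomial μ (1 : ZMod 2)) = 0 := by
  rw [Ideal.Quotient.eq_zero_iff_mem]
  rw [Adm, not_forall] at hμ
  obtain ⟨i, hi⟩ := hμ
  have hle : Finsupp.single (Sum.inl i : Fin n ⊕ Fin n) 2 ≤ μ :=
    Finsupp.single_le_iff.mpr (by omega)
  have hdecomp : monomial μ (1 : ZMod 2) =
      (X (Sum.inl i) : MvPolynomial (Fin n ⊕ Fin n) (ZMod 2)) ^ 2 *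
        monomial (μ - Finsupp.single (Sum.inl i) 2) 1 := by
    rw [X_pow_eq_monomial, monomial_mul, one_mul, add_tsub_cancel_of_le hle]
  rw [hdecomp]
  exact Ideal.mul_mem_right _ _ (Ideal.subset_span ⟨i, rfl⟩)

lemma eq_zero_of_mk_eq_zero {p : MvPolynomial (Fin n ⊕ Fin n) (ZMod 2)}
    (hsupp : ∀ μ ∈ p.support, Adm μ)
    (h : Ideal.Quotient.mk (sqIdealK n) p = 0) : p = 0 := by
  rw [Ideal.Quotient.eq_zero_iff_mem] at h
  ext μ
  rw [coeff_zero]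
  by_cases hμ : μ ∈ p.support
  · exact coeff_eq_zero_of_mem h μ (hsupp μ hμ)
  · exact MvPolynomial.notMem_support_iff.mp hμ

lemma support_mem_of_mem_span {S : Set ((Fin n ⊕ Fin n) →₀ ℕ)}
    {p : MvPolynomial (Fin n ⊕ Fin n) (ZMod 2)}
    (hp : p ∈ Submodule.span (ZMod 2) ((fun μ => monomial μ (1 : ZMod 2)) '' S)) :
    ∀ μ ∈ p.support, μ ∈ S := by
  refine Submodule.span_induction ?_ ?_ ?_ ?_ hp
  · rintro _ ⟨μ, hμ, rfl⟩ ν hν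
    rw [support_monomial] at hν
    simp only [one_ne_zero, if_false, Finset.mem_singleton] at hν
    rwa [hν]
  · intro μ hμ; simp at hμ
  · intro x y _ _ hx hy μ hμ
    rcases Finset.mem_union.mp (MvPolynomial.support_add hμ) with h | h
    · exact hx μ h
    · exact hy μ h
  · intro c x _ ih μ hμ
    exact ih μ (Finsupp.support_smul hμ)

lemma permActK_mk (g : Equiv.Perm (Fin n)) (p : MvPolynomial (Fin n ⊕ Fin n) (ZMod 2)) :
    permActK n g (Ideal.Quotient.mk (sqIdealK n) p) =
      Ideal.Quotient.mk (sqIdealK n) (rename (Sum.map ⇑g ⇑g) p) := rfl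

lemma rename_monomial_act (g : Equiv.Perm (Fin n)) (μ : (Fin n ⊕ Fin n) →₀ ℕ) :
    rename (Sum.map ⇑g ⇑g) (monomial μ (1 : ZMod 2)) = monomial (act g μ) 1 := by
  rw [rename_monomial]
  congr 1
  rw [act, Finsupp.equivMapDomain_eq_mapDomain]
  congr 1

lemma sum_map_injective (g : Equiv.Perm (Fin n)) :
    Function.Injective (Sum.map ⇑g ⇑g : Fin n ⊕ Fin n → Fin n ⊕ Fin n) := by
  have : (Sum.map ⇑g ⇑g : Fin n ⊕ Fin n → Fin n ⊕ Fin n) = ⇑(Equiv.sumCongr g g) := rfl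
  rw [this]
  exact (Equiv.sumCongr g g).injective

lemma act_eq_mapDomain (g : Equiv.Perm (Fin n)) (μ : (Fin n ⊕ Fin n) →₀ ℕ) :
    act g μ = Finsupp.mapDomain (Sum.map ⇑g ⇑g) μ := by
  rw [act, Finsupp.equivMapDomain_eq_mapDomain]
  rfl

end Stmt17

namespace Stmt17
open MvPolynomial

variable {n : ℕ}

noncomputable def orbitFinset (μ : (Fin n ⊕ Fin n) →₀ ℕ) : Finset ((Fin n ⊕ Fin n) →₀ ℕ) :=
  Finset.image (fun g : Equiv.Perm (Fin n) => act g μ) Finset.univ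

noncomputable def P (μ : (Fin n ⊕ Fin n) →₀ ℕ) : MvPolynomial (Fin n ⊕ Fin n) (ZMod 2) :=
  ∑ ν ∈ orbitFinset μ, monomial ν 1

lemma orbitSum_eq_mk_P (μ : (Fin n ⊕ Fin n) →₀ ℕ) :
    orbitSum n μ = Ideal.Quotient.mk (sqIdealK n) (P μ) := rfl

lemma mem_orbitFinset {μ ν : (Fin n ⊕ Fin n) →₀ ℕ} :
    ν ∈ orbitFinset μ ↔ ∃ g : Equiv.Perm (Fin n), act g μ = ν := by
  simp [orbitFinset]

lemma self_mem_orbitFinset (μ : (Fin n ⊕ Fin n) →₀ ℕ) : μ ∈ orbitFinset μ :=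
  mem_orbitFinset.mpr ⟨1, act_one μ⟩

lemma coeff_P (μ ν : (Fin n ⊕ Fin n) →₀ ℕ) :
    coeff ν (P μ) = if ν ∈ orbitFinset μ then 1 else 0 := by
  rw [P]
  rw [MvPolynomial.coeff_sum]
  have : ∀ ν' ∈ orbitFinset μ, coeff ν (monomial ν' (1 : ZMod 2))
      = if ν' = ν then 1 else 0 := fun ν' _ => coeff_monomial ν ν' 1
  rw [Finset.sum_congr rfl this, Finset.sum_ite_eq' (orbitFinset μ) ν (fun _ => (1 : ZMod 2))]

lemma act_injective (g : Equiv.Perm (Fin n)) :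
    Function.Injective (act g : ((Fin n ⊕ Fin n) →₀ ℕ) → _) := by
  intro x y h
  have := congrArg (act g⁻¹) h
  rwa [act_act, act_act, inv_mul_cancel, act_one, act_one] at this

lemma image_act_orbitFinset (g : Equiv.Perm (Fin n)) (μ : (Fin n ⊕ Fin n) →₀ ℕ) :
    (orbitFinset μ).image (act g) = orbitFinset μ := by
  ext ν
  rw [Finset.mem_image]
  constructor
  · rintro ⟨ν', hν', rfl⟩
    obtain ⟨h, rfl⟩ := mem_orbitFinset.mp hν'
    rw [act_act]
    exact mem_orbitFinset.mpr ⟨g * h, rfl⟩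
  · intro hν
    obtain ⟨h, rfl⟩ := mem_orbitFinset.mp hν
    exact ⟨act (g⁻¹ * h) μ, mem_orbitFinset.mpr ⟨g⁻¹ * h, rfl⟩, by
      rw [act_act]; rw [show g * (g⁻¹ * h) = h by group]⟩

lemma rename_P (g : Equiv.Perm (Fin n)) (μ : (Fin n ⊕ Fin n) →₀ ℕ) :
    rename (Sum.map ⇑g ⇑g) (P μ) = P μ := by
  rw [P, map_sum]
  have h1 : ∀ ν ∈ orbitFinset μ, rename (Sum.map ⇑g ⇑g) (monomial ν (1 : ZMod 2))
      = monomial (act g ν) 1 := fun ν _ => rename_monomial_act g ν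
  rw [Finset.sum_congr rfl h1]
  rw [← Finset.sum_image (g := act g) (f := fun ν => monomial ν (1 : ZMod 2))
      (fun x _ y _ h => act_injective g h)]
  rw [image_act_orbitFinset]

lemma orbitSum_mem_Ln (μ : (Fin n ⊕ Fin n) →₀ ℕ) : orbitSum n μ ∈ Ln n := by
  intro g
  rw [orbitSum_eq_mk_P, permActK_mk, rename_P]

lemma orbitSum_mem_degComp {d : ℕ} {μ : (Fin n ⊕ Fin n) →₀ ℕ} (h : wt μ = d) :
    orbitSum n μ ∈ degComp n d := by
  rw [orbitSum_eq_mk_P, P, map_sum]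
  apply Submodule.sum_mem
  intro ν hν
  apply Submodule.subset_span
  obtain ⟨g, rfl⟩ := mem_orbitFinset.mp hν
  exact ⟨act g μ, by rw [show (∑ i, act g μ (Sum.inl i)) + 2 * ∑ i, act g μ (Sum.inr i) = wt (act g μ) from rfl, wt_act, h], rfl⟩

lemma partsOf_of_mem_orbit {μ ν : (Fin n ⊕ Fin n) →₀ ℕ} (h : ν ∈ orbitFinset μ) :
    partsOf ν = partsOf μ := by
  obtain ⟨g, rfl⟩ := mem_orbitFinset.mp h
  exact partsOf_act g μ

lemma adm_of_mem_orbit {μ ν : (Fin n ⊕ Fin n) →₀ ℕ} (hμ : Adm μ) (h : ν ∈ orbitFinset μ) :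
    Adm ν := by
  obtain ⟨g, rfl⟩ := mem_orbitFinset.mp h
  exact adm_act g hμ

lemma wt_of_mem_orbit {μ ν : (Fin n ⊕ Fin n) →₀ ℕ} (h : ν ∈ orbitFinset μ) :
    wt ν = wt μ := by
  obtain ⟨g, rfl⟩ := mem_orbitFinset.mp h
  exact wt_act g μ

lemma mem_orbit_of_partsOf_eq {μ ν : (Fin n ⊕ Fin n) →₀ ℕ} (hμ : Adm μ) (hν : Adm ν)
    (h : partsOf μ = partsOf ν) : ν ∈ orbitFinset μ :=
  mem_orbitFinset.mpr (exists_act_eq hμ hν h)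

lemma multiset_card_le_sum {s : Multiset ℕ} (h : ∀ x ∈ s, 0 < x) :
    Multiset.card s ≤ s.sum := by
  induction s using Multiset.induction with
  | empty => simp
  | cons a s ih =>
    simp only [Multiset.card_cons, Multiset.sum_cons]
    have h1 := h a (Multiset.mem_cons_self a s)
    have h2 := ih (fun x hx => h x (Multiset.mem_cons_of_mem hx))
    omega

end Stmt17

namespace Stmt17
open MvPolynomial

variable {n : ℕ}

lemma mk_injOn {p q : MvPolynomial (Fin n ⊕ Fin n) (ZMod 2)}
    (hp : ∀ μ ∈ p.support, Adm μ) (hq : ∀ μ ∈ q.support, Adm μ)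
    (h : Ideal.Quotient.mk (sqIdealK n) p = Ideal.Quotient.mk (sqIdealK n) q) : p = q := by
  have hsub : p - q ∈ sqIdealK n := Ideal.Quotient.eq.mp h
  ext μ
  by_cases hA : Adm μ
  · have h2 := coeff_eq_zero_of_mem hsub μ hA
    rw [coeff_sub, sub_eq_zero] at h2
    exact h2
  · have h1 : coeff μ p = 0 := by
      by_contra hc
      exact hA (hp μ (MvPolynomial.mem_support_iff.mpr hc))
    have h2 : coeff μ q = 0 := by
      by_contra hc
      exact hA (hq μ (MvPolynomial.mem_support_iff.mpr hc))
    rw [h1, h2]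

section Main

variable (n d : ℕ) (hd : d ≤ n)

noncomputable def muof (π : Nat.Partition d) : (Fin n ⊕ Fin n) →₀ ℕ :=
  Classical.choose (exists_adm_partsOf (n := n) π.parts
    (fun _ hx => (π.parts_pos hx).ne')
    (le_trans (multiset_card_le_sum (fun _ hx => π.parts_pos hx))
      (by rw [π.parts_sum]; exact hd)))

lemma adm_muof (π : Nat.Partition d) : Adm (muof n d hd π) :=
  (Classical.choose_spec (exists_adm_partsOf (n := n) π.parts
    (fun _ hx => (π.parts_pos hx).ne')
    (le_trans (multiset_card_le_sum (fun _ hx => π.parts_pos hx))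
      (by rw [π.parts_sum]; exact hd)))).1

lemma partsOf_muof (π : Nat.Partition d) : partsOf (muof n d hd π) = π.parts :=
  (Classical.choose_spec (exists_adm_partsOf (n := n) π.parts
    (fun _ hx => (π.parts_pos hx).ne')
    (le_trans (multiset_card_le_sum (fun _ hx => π.parts_pos hx))
      (by rw [π.parts_sum]; exact hd)))).2

lemma wt_muof (π : Nat.Partition d) : wt (muof n d hd π) = d := by
  rw [← sum_partsOf, partsOf_muof, π.parts_sum]

/-- the partition attached to an exponent vector of weight `d` -/
noncomputable def partnOf {μ : (Fin n ⊕ Fin n) →₀ ℕ} (hwt : wt μ = d) : Nat.Partition d :=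
  ⟨partsOf μ, fun hx => pos_partsOf μ _ hx, by rw [sum_partsOf, hwt]⟩

lemma mem_orbit_muof_iff {μ : (Fin n ⊕ Fin n) →₀ ℕ} (hA : Adm μ) (hwt : wt μ = d)
    (π : Nat.Partition d) :
    μ ∈ orbitFinset (muof n d hd π) ↔ π = partnOf n d hwt := by
  constructor
  · intro h
    have h1 := partsOf_of_mem_orbit h
    rw [partsOf_muof] at h1
    exact Nat.Partition.ext h1.symm
  · rintro rfl
    exact mem_orbit_of_partsOf_eq (adm_muof n d hd _) hA (by rw [partsOf_muof]; rfl)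

noncomputable def mkL : MvPolynomial (Fin n ⊕ Fin n) (ZMod 2) →ₗ[ZMod 2] Kn n :=
  (Ideal.Quotient.mkₐ (ZMod 2) (sqIdealK n)).toLinearMap

lemma mkL_apply (p : MvPolynomial (Fin n ⊕ Fin n) (ZMod 2)) :
    mkL n p = Ideal.Quotient.mk (sqIdealK n) p := rfl

/-- the generating set of admissible degree-`d` monomials -/
def MT : Set (MvPolynomial (Fin n ⊕ Fin n) (ZMod 2)) :=
  (fun μ => monomial μ (1 : ZMod 2)) '' {μ | Adm μ ∧ wt μ = d}

lemma degComp_le_map :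
    degComp n d ≤ Submodule.map (mkL n) (Submodule.span (ZMod 2) (MT n d)) := by
  rw [degComp]
  apply Submodule.span_le.mpr
  rintro x ⟨μ, hwt, rfl⟩
  by_cases hA : Adm μ
  · exact ⟨monomial μ 1, Submodule.subset_span ⟨μ, ⟨hA, hwt⟩, rfl⟩, rfl⟩
  · rw [mk_eq_zero_of_not_adm hA]
    exact Submodule.zero_mem _

lemma span_top : Subalgebra.toSubmodule (Ln n) ⊓ degComp n d ≤
    Submodule.span (ZMod 2)
      (Set.range (fun π : Nat.Partition d => orbitSum n (muof n d hd π))) := by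
  intro x hx
  rw [Submodule.mem_inf] at hx
  obtain ⟨hLn, hdc⟩ := hx
  rw [Subalgebra.mem_toSubmodule] at hLn
  obtain ⟨p, hp, hmk⟩ := degComp_le_map n d hdc
  have hsupp : ∀ μ ∈ p.support, Adm μ ∧ wt μ = d := support_mem_of_mem_span hp
  -- invariance of p
  have hinv : ∀ g : Equiv.Perm (Fin n), rename (Sum.map ⇑g ⇑g) p = p := by
    intro g
    classical
    have h1 : Ideal.Quotient.mk (sqIdealK n) (rename (Sum.map ⇑g ⇑g) p) =
        Ideal.Quotient.mk (sqIdealK n) p := by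
      have h2 := hLn g
      rw [← hmk, mkL_apply, permActK_mk] at h2
      exact h2
    refine mk_injOn ?_ (fun μ hμ => (hsupp μ hμ).1) h1
    intro μ hμ
    rw [MvPolynomial.support_rename_of_injective (sum_map_injective g)] at hμ
    obtain ⟨ν, hν, rfl⟩ := Finset.mem_image.mp hμ
    rw [← act_eq_mapDomain]
    exact adm_act g (hsupp ν hν).1
  have hcoeffinv : ∀ (μ ν : (Fin n ⊕ Fin n) →₀ ℕ), ν ∈ orbitFinset μ →
      coeff ν p = coeff μ p := by
    rintro μ ν hν
    obtain ⟨g, rfl⟩ := mem_orbitFinset.mp hν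
    rw [act_eq_mapDomain]
    conv_lhs => rw [← hinv g]
    rw [coeff_rename_mapDomain _ (sum_map_injective g)]
  -- decomposition of p
  have hdecomp : p = ∑ π : Nat.Partition d, coeff (muof n d hd π) p • P (muof n d hd π) := by
    ext μ
    rw [MvPolynomial.coeff_sum]
    have hterm : ∀ π : Nat.Partition d,
        coeff μ (coeff (muof n d hd π) p • P (muof n d hd π)) =
          if μ ∈ orbitFinset (muof n d hd π) then coeff μ p else 0 := by
      intro π
      rw [MvPolynomial.coeff_smul, coeff_P, smul_eq_mul, mul_ite, mul_one, mul_zero]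
      by_cases hmem : μ ∈ orbitFinset (muof n d hd π)
      · rw [if_pos hmem, if_pos hmem, hcoeffinv _ _ hmem]
      · rw [if_neg hmem, if_neg hmem]
    rw [Finset.sum_congr rfl (fun π _ => hterm π)]
    by_cases hA : Adm μ ∧ wt μ = d
    · obtain ⟨hA1, hA2⟩ := hA
      have : ∀ π : Nat.Partition d,
          (if μ ∈ orbitFinset (muof n d hd π) then coeff μ p else 0) =
            (if π = partnOf n d hA2 then coeff μ p else 0) := by
        intro π
        rw [if_congr (mem_orbit_muof_iff n d hd hA1 hA2 π) rfl rfl]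
      rw [Finset.sum_congr rfl (fun π _ => this π),
        Finset.sum_ite_eq' Finset.univ (partnOf n d hA2) (fun _ => coeff μ p),
        if_pos (Finset.mem_univ _)]
    · have h0 : coeff μ p = 0 := by
        by_contra hc
        exact hA (hsupp μ (MvPolynomial.mem_support_iff.mpr hc))
      rw [h0]
      simp
  -- conclude
  rw [← hmk, hdecomp, map_sum]
  apply Submodule.sum_mem
  intro π _
  rw [map_smul]
  apply Submodule.smul_mem
  apply Submodule.subset_span
  exact ⟨π, (orbitSum_eq_mk_P _).symm⟩

lemma indep : LinearIndependent (ZMod 2)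
    (fun π : Nat.Partition d => orbitSum n (muof n d hd π)) := by
  rw [linearIndependent_iff']
  intro s c h π hπ
  set q : MvPolynomial (Fin n ⊕ Fin n) (ZMod 2) :=
    ∑ π' ∈ s, c π' • P (muof n d hd π') with hq
  have hq0 : Ideal.Quotient.mk (sqIdealK n) q = 0 := by
    rw [← mkL_apply, hq, map_sum, ← h]
    exact Finset.sum_congr rfl
      (fun π' _ => by rw [map_smul, mkL_apply, ← orbitSum_eq_mk_P])
  have hqcoeff : ∀ μ, coeff μ q = ∑ π' ∈ s,
      (if μ ∈ orbitFinset (muof n d hd π') then c π' else 0) := by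
    intro μ
    rw [hq, MvPolynomial.coeff_sum]
    apply Finset.sum_congr rfl
    intro π' _
    rw [MvPolynomial.coeff_smul, coeff_P, smul_eq_mul, mul_ite, mul_one, mul_zero]
  have hsupp : ∀ μ ∈ q.support, Adm μ := by
    intro μ hμ
    by_contra hA
    apply MvPolynomial.mem_support_iff.mp hμ
    rw [hqcoeff μ]
    apply Finset.sum_eq_zero
    intro π' _
    rw [if_neg (fun hmem => hA (adm_of_mem_orbit (adm_muof n d hd π') hmem))]
  have hq00 : q = 0 := eq_zero_of_mk_eq_zero hsupp hq0
  have := congrArg (coeff (muof n d hd π)) hq00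
  rw [hqcoeff, coeff_zero] at this
  have hcollapse : ∀ π' ∈ s,
      (if muof n d hd π ∈ orbitFinset (muof n d hd π') then c π' else 0) =
        (if π' = π then c π' else 0) := by
    intro π' _
    by_cases he : π' = π
    · subst he
      rw [if_pos (self_mem_orbitFinset _), if_pos rfl]
    · have hnot : muof n d hd π ∉ orbitFinset (muof n d hd π') := by
        intro hmem
        apply he
        have h1 := partsOf_of_mem_orbit hmem
        rw [partsOf_muof, partsOf_muof] at h1
        exact (Nat.Partition.ext h1).symm
      rw [if_neg hnot, if_neg he]
  rw [Finset.sum_congr rfl hcollapse, Finset.sum_ite_eq' s π (fun π' => c π'),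
    if_pos hπ] at this
  exact this

end Main

end Stmt17

/-- the Poincaré series of `L_∞` agrees with that of `F₂[v_1, v_2, …]` with
`deg vᵢ = i`; equivalently (via the stability isomorphism in degrees `≤ n`), for `d ≤ n` the
dimension of the degree-`d` part of `L_n` equals the number of partitions of `d`. -/
theorem stmt17 (n d : ℕ) (hd : d ≤ n) :
    Module.finrank (ZMod 2)
        ↥(Subalgebra.toSubmodule (Ln n) ⊓ degComp n d) =
      Fintype.card (Nat.Partition d) := by
  classical
  set M := Subalgebra.toSubmodule (Ln n) ⊓ degComp n d with hM
  have hmem : ∀ π : Nat.Partition d, orbitSum n (Stmt17.muof n d hd π) ∈ M := by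
    intro π
    rw [hM, Submodule.mem_inf]
    exact ⟨(Subalgebra.mem_toSubmodule _).mpr (Stmt17.orbitSum_mem_Ln _),
      Stmt17.orbitSum_mem_degComp (Stmt17.wt_muof n d hd π)⟩
  set v : Nat.Partition d → M := fun π => ⟨orbitSum n (Stmt17.muof n d hd π), hmem π⟩ with hv
  have hind : LinearIndependent (ZMod 2) v := by
    apply LinearIndependent.of_comp M.subtype
    exact Stmt17.indep n d hd
  have hspan : ⊤ ≤ Submodule.span (ZMod 2) (Set.range v) := by
    rintro ⟨x, hx⟩ -
    have hx1 : x ∈ Submodule.span (ZMod 2)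
        (Set.range (fun π : Nat.Partition d => orbitSum n (Stmt17.muof n d hd π))) :=
      Stmt17.span_top n d hd hx
    have himg : Submodule.map M.subtype (Submodule.span (ZMod 2) (Set.range v)) =
        Submodule.span (ZMod 2)
          (Set.range (fun π : Nat.Partition d => orbitSum n (Stmt17.muof n d hd π))) := by
      rw [Submodule.map_span]
      congr 1
      rw [← Set.range_comp]
      rfl
    rw [← himg] at hx1
    obtain ⟨y, hy, hyx⟩ := hx1
    have hxy : y = ⟨x, hx⟩ := Subtype.ext hyx
    rwa [← hxy]
  exact Module.finrank_eq_card_basis (Module.Basis.mk hind hspan)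
end
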